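/- For every integer r ≥ 1 and every index i of the sequence A: rank(i) = r if and only if rank(i) ≥ r and A(i) ≤ A(j) holds for every index j < i with rank(j) ≥ r. In other words, i has rank r exactly when i remains and is a prefix-min index after removing all indices of rank smaller than r. -/

import Mathlib

/-- `l` is a strictly increasing subsequence of `A` ending at index `i`. -/
def IsIncEndingAt {n : ℕ} {α : Type*} [LinearOrder α] (A : Fin n → α)
    (l : List (Fin n)) (i : Fin n) : Prop :=
  l.Chain' (· < ·) ∧ (l.map A).Chain' (· < ·) ∧ l.getLast? = some i

/-- The rank of index `i`: the maximum length of an increasing subsequence of `A`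
ending at `i`. -/
noncomputable def lisRank {n : ℕ} {α : Type*} [LinearOrder α] (A : Fin n → α)
    (i : Fin n) : ℕ :=
  sSup {m : ℕ | ∃ l : List (Fin n), IsIncEndingAt A l i ∧ l.length = m}

section Aux
variable {n : ℕ} {α : Type*} [LinearOrder α] (A : Fin n → α)

lemma aux_bdd (i : Fin n) :
    BddAbove {m : ℕ | ∃ l : List (Fin n), IsIncEndingAt A l i ∧ l.length = m} := by
  refine ⟨n, fun m hm => ?_⟩
  obtain ⟨l, ⟨hc, -, -⟩, rfl⟩ := hm
  have hnd : l.Nodup := (List.isChain_iff_pairwise.mp hc).imp (fun h => ne_of_lt h)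
  simpa using hnd.length_le_card

lemma aux_mem (i : Fin n) :
    lisRank A i ∈ {m : ℕ | ∃ l : List (Fin n), IsIncEndingAt A l i ∧ l.length = m} := by
  have h1 : (1:ℕ) ∈ {m : ℕ | ∃ l : List (Fin n), IsIncEndingAt A l i ∧ l.length = m} :=
    ⟨[i], ⟨List.isChain_singleton i, List.isChain_singleton _, rfl⟩, rfl⟩
  exact Nat.sSup_mem ⟨1, h1⟩ (aux_bdd A i)

lemma aux_le (i : Fin n) {m : ℕ}
    (hm : m ∈ {m : ℕ | ∃ l : List (Fin n), IsIncEndingAt A l i ∧ l.length = m}) :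
    m ≤ lisRank A i := le_csSup (aux_bdd A i) hm

lemma aux_extend {i j : Fin n} (hji : j < i) (hA : A j < A i) :
    lisRank A j + 1 ≤ lisRank A i := by
  obtain ⟨l, ⟨hc, hcA, hlast⟩, hlen⟩ := aux_mem A j
  apply aux_le
  refine ⟨l ++ [i], ⟨?_, ?_, ?_⟩, by simp [hlen]⟩
  · rw [List.Chain', List.isChain_append]
    exact ⟨hc, List.isChain_singleton i, by simp [hlast]; exact hji⟩
  · rw [List.map_append, List.Chain', List.isChain_append]
    refine ⟨hcA, by simp, ?_⟩
    simp [List.getLast?_map, hlast]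
    exact hA
  · simp

lemma aux_shrink {i : Fin n} {r : ℕ} (hr : 1 ≤ r) (h : r + 1 ≤ lisRank A i) :
    ∃ j : Fin n, j < i ∧ A j < A i ∧ r ≤ lisRank A j := by
  obtain ⟨l, ⟨hc, hcA, hlast⟩, hlen⟩ := aux_mem A i
  have hne : l ≠ [] := by rintro rfl; simp at hlast
  have hgetLast : l.getLast hne = i := by
    rwa [List.getLast?_eq_getLast hne, Option.some_inj] at hlast
  have hdne : l.dropLast ≠ [] := by
    intro h0
    have := List.length_dropLast (xs := l)
    rw [h0] at this
    simp [hlen] at this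
    omega
  set j := l.dropLast.getLast hdne with hj
  have hsplit : l = l.dropLast ++ [i] := by
    conv_lhs => rw [← List.dropLast_append_getLast hne, hgetLast]
  have hjlast : l.dropLast.getLast? = some j := List.getLast?_eq_getLast hdne
  rw [hsplit, List.Chain', List.isChain_append] at hc
  rw [hsplit, List.map_append, List.Chain', List.isChain_append] at hcA
  have hji : j < i := hc.2.2 j hjlast i rfl
  have hAji : A j < A i := by
    refine hcA.2.2 (A j) ?_ (A i) rfl
    rw [List.getLast?_map, hjlast]; rfl
  refine ⟨j, hji, hAji, ?_⟩
  calc r ≤ l.dropLast.length := by rw [List.length_dropLast, hlen]; omega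
    _ ≤ lisRank A j := aux_le A j ⟨l.dropLast, ⟨hc.1, hcA.1, hjlast⟩, rfl⟩

end Aux

/-- For every `r ≥ 1`, an index `i` has rank exactly `r` iff `i` has rank at least
`r` and `A i ≤ A j` for every `j < i` whose rank is at least `r`; i.e. `i` remains
and is a prefix-min index after removing all indices of rank smaller than `r`. -/
theorem lisRank_eq_iff_prefixMin_after_removal {n : ℕ} {α : Type*} [LinearOrder α]
    (A : Fin n → α) (r : ℕ) (hr : 1 ≤ r) (i : Fin n) :
    lisRank A i = r ↔
      (r ≤ lisRank A i ∧ ∀ j : Fin n, j < i → r ≤ lisRank A j → A i ≤ A j) := by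
  constructor
  · intro h
    refine ⟨h.ge, fun j hji hrj => ?_⟩
    by_contra hc
    push_neg at hc
    have := aux_extend A hji hc
    omega
  · rintro ⟨h1, h2⟩
    by_contra hne
    have h3 : r + 1 ≤ lisRank A i := by omega
    obtain ⟨j, hji, hAji, hrj⟩ := aux_shrink A hr h3
    exact absurd (h2 j hji hrj) (not_le.mpr hAji)
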